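/- □-free formulas: ⊘ and ∨ coincide on subsingleton teams (Theorem 8b, case □ ∉ M): let φ be an MDL formula containing no occurrence of the modality □, and let φ' be obtained from φ by replacing every occurrence of the classical disjunction ⊘ by the dependence disjunction ∨. Then for every frame W and every team T containing at most one world, W,T ⊨ φ if and only if W,T ⊨ φ'. -/
import Mathlib


/-- Formulas of modal dependence logic over atomic propositions `AP`.
Negation occurs only in front of atoms (`natom`) and dependence atoms (`ndep`).
`dep ps q` is the dependence atom dep(p₁,…,p_{n-1};p_n) with `ps` the list
p₁,…,p_{n-1} and `q = p_n`.  `or` is dependence disjunction ∨ and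
`cor` is classical disjunction ⊘. -/
inductive MDL (AP : Type) : Type
  | top : MDL AP
  | bot : MDL AP
  | atom : AP → MDL AP
  | natom : AP → MDL AP
  | dep : List AP → AP → MDL AP
  | ndep : List AP → AP → MDL AP
  | and : MDL AP → MDL AP → MDL AP
  | or : MDL AP → MDL AP → MDL AP
  | cor : MDL AP → MDL AP → MDL AP
  | box : MDL AP → MDL AP
  | dia : MDL AP → MDL AP

/-- A Kripke frame `W = (S, R, π)`. -/
structure Frame (AP : Type) where
  S : Type
  R : S → S → Prop
  pi : S → Set AP

/-- Team semantics of MDL: `sat W φ T` means `W, T ⊨ φ`. -/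
def sat {AP : Type} (W : Frame AP) : MDL AP → Set W.S → Prop
  | .top, _ => True
  | .bot, T => T = ∅
  | .atom p, T => ∀ s ∈ T, p ∈ W.pi s
  | .natom p, T => ∀ s ∈ T, p ∉ W.pi s
  | .dep ps q, T => ∀ s₁ ∈ T, ∀ s₂ ∈ T,
      (∀ p ∈ ps, (p ∈ W.pi s₁ ↔ p ∈ W.pi s₂)) → (q ∈ W.pi s₁ ↔ q ∈ W.pi s₂)
  | .ndep _ _, T => T = ∅
  | .and φ ψ, T => sat W φ T ∧ sat W ψ T
  | .or φ ψ, T => ∃ T₁ T₂, T = T₁ ∪ T₂ ∧ sat W φ T₁ ∧ sat W ψ T₂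
  | .cor φ ψ, T => sat W φ T ∨ sat W ψ T
  | .box φ, T => sat W φ {s' | ∃ s ∈ T, W.R s s'}
  | .dia φ, T => ∃ T' : Set W.S, sat W φ T' ∧ ∀ s ∈ T, ∃ s' ∈ T', W.R s s'

/-- A formula is satisfiable iff some frame and nonempty team satisfy it. -/
def satisfiable {AP : Type} (φ : MDL AP) : Prop :=
  ∃ (W : Frame AP) (T : Set W.S), T.Nonempty ∧ sat W φ T

/-- A formula contains no occurrence of □. -/
def boxFree {AP : Type} : MDL AP → Prop
  | .box _ => False
  | .and φ ψ => boxFree φ ∧ boxFree ψ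
  | .or φ ψ => boxFree φ ∧ boxFree ψ
  | .cor φ ψ => boxFree φ ∧ boxFree ψ
  | .dia φ => boxFree φ
  | _ => True

/-- Replace every classical disjunction ⊘ by dependence disjunction ∨. -/
def corToOr {AP : Type} : MDL AP → MDL AP
  | .cor φ ψ => .or (corToOr φ) (corToOr ψ)
  | .and φ ψ => .and (corToOr φ) (corToOr ψ)
  | .or φ ψ => .or (corToOr φ) (corToOr ψ)
  | .box φ => .box (corToOr φ)
  | .dia φ => .dia (corToOr φ)
  | φ => φ

/-- Empty team property: every formula is satisfied on the empty team. -/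
lemma sat_empty {AP : Type} (W : Frame AP) (φ : MDL AP) : sat W φ ∅ := by
  induction φ with
  | top => trivial
  | bot => rfl
  | atom p => intro s hs; exact absurd hs (Set.notMem_empty s)
  | natom p => intro s hs; exact absurd hs (Set.notMem_empty s)
  | dep ps q => intro s hs; exact absurd hs (Set.notMem_empty s)
  | ndep ps q => rfl
  | and φ ψ ihφ ihψ => exact ⟨ihφ, ihψ⟩
  | or φ ψ ihφ ihψ => exact ⟨∅, ∅, by simp, ihφ, ihψ⟩
  | cor φ ψ ihφ ihψ => exact Or.inl ihφ
  | box φ ih =>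
      show sat W φ _
      convert ih using 2
      ext s; simp
  | dia φ ih => exact ⟨∅, ih, fun s hs => absurd hs (Set.notMem_empty s)⟩

/-- Downward closure: satisfaction is preserved under subteams. -/
lemma sat_mono {AP : Type} (W : Frame AP) (φ : MDL AP) :
    ∀ T T' : Set W.S, T' ⊆ T → sat W φ T → sat W φ T' := by
  induction φ with
  | top => intro T T' _ _; trivial
  | bot => intro T T' hsub h; subst h; exact Set.subset_eq_empty hsub rfl
  | atom p => intro T T' hsub h s hs; exact h s (hsub hs)
  | natom p => intro T T' hsub h s hs; exact h s (hsub hs)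
  | dep ps q => intro T T' hsub h s₁ h₁ s₂ h₂ hps; exact h s₁ (hsub h₁) s₂ (hsub h₂) hps
  | ndep ps q => intro T T' hsub h; subst h; exact Set.subset_eq_empty hsub rfl
  | and φ ψ ihφ ihψ =>
      intro T T' hsub h; exact ⟨ihφ T T' hsub h.1, ihψ T T' hsub h.2⟩
  | or φ ψ ihφ ihψ =>
      rintro T T' hsub ⟨T₁, T₂, hUnion, h₁, h₂⟩
      refine ⟨T' ∩ T₁, T' ∩ T₂, ?_, ihφ T₁ _ Set.inter_subset_right h₁,
        ihψ T₂ _ Set.inter_subset_right h₂⟩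
      rw [← Set.inter_union_distrib_left, ← hUnion]
      exact (Set.inter_eq_left.mpr hsub).symm
  | cor φ ψ ihφ ihψ =>
      rintro T T' hsub (h | h)
      · exact Or.inl (ihφ T T' hsub h)
      · exact Or.inr (ihψ T T' hsub h)
  | box φ ih =>
      intro T T' hsub h
      refine ih _ _ ?_ h
      rintro s' ⟨s, hs, hR⟩
      exact ⟨s, hsub hs, hR⟩
  | dia φ ih =>
      rintro T T' hsub ⟨T'', h₁, h₂⟩
      exact ⟨T'', h₁, fun s hs => h₂ s (hsub hs)⟩

/-- for □-free formulas, ⊘ and ∨ coincide on subsingleton teams. -/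
theorem boxFree_cor_eq_or {AP : Type} (φ : MDL AP) (hφ : boxFree φ)
    (W : Frame AP) (T : Set W.S) (hT : T.Subsingleton) :
    sat W φ T ↔ sat W (corToOr φ) T := by
  induction φ generalizing T with
  | top => simp [corToOr]
  | bot => simp [corToOr]
  | atom p => simp [corToOr]
  | natom p => simp [corToOr]
  | dep ps q => simp [corToOr]
  | ndep ps q => simp [corToOr]
  | and φ ψ ihφ ihψ =>
      obtain ⟨h1, h2⟩ := hφ
      exact and_congr (ihφ h1 T hT) (ihψ h2 T hT)
  | or φ ψ ihφ ihψ =>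
      obtain ⟨h1, h2⟩ := hφ
      constructor
      · rintro ⟨T₁, T₂, hU, hs1, hs2⟩
        exact ⟨T₁, T₂, hU,
          (ihφ h1 T₁ (hT.anti (hU ▸ Set.subset_union_left))).mp hs1,
          (ihψ h2 T₂ (hT.anti (hU ▸ Set.subset_union_right))).mp hs2⟩
      · rintro ⟨T₁, T₂, hU, hs1, hs2⟩
        exact ⟨T₁, T₂, hU,
          (ihφ h1 T₁ (hT.anti (hU ▸ Set.subset_union_left))).mpr hs1,
          (ihψ h2 T₂ (hT.anti (hU ▸ Set.subset_union_right))).mpr hs2⟩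
  | cor φ ψ ihφ ihψ =>
      obtain ⟨h1, h2⟩ := hφ
      constructor
      · rintro (h | h)
        · exact ⟨T, ∅, by simp, (ihφ h1 T hT).mp h, sat_empty W _⟩
        · exact ⟨∅, T, by simp, sat_empty W _, (ihψ h2 T hT).mp h⟩
      · rintro ⟨T₁, T₂, hU, hs1, hs2⟩
        rcases Set.eq_empty_or_nonempty T with hTe | ⟨a, ha⟩
        · subst hTe
          exact Or.inl ((ihφ h1 ∅ (Set.subsingleton_empty)).mpr (sat_empty W _))
        · have hTa : T = {a} := (hT.eq_singleton_of_mem ha)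
          have : a ∈ T₁ ∪ T₂ := hU ▸ ha
          rcases this with h | h
          · have hT1 : T ⊆ T₁ := by rw [hTa]; simpa using h
            exact Or.inl ((ihφ h1 T hT).mpr (sat_mono W _ T₁ T hT1 hs1))
          · have hT2 : T ⊆ T₂ := by rw [hTa]; simpa using h
            exact Or.inr ((ihψ h2 T hT).mpr (sat_mono W _ T₂ T hT2 hs2))
  | box φ ih => exact absurd hφ id
  | dia φ ih =>
      constructor
      · rintro ⟨T', hs, hcov⟩
        rcases Set.eq_empty_or_nonempty T with hTe | ⟨a, ha⟩
        · exact ⟨∅, sat_empty W _, by simp [hTe]⟩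
        · obtain ⟨s', hs', hR⟩ := hcov a ha
          refine ⟨{s'}, ?_, ?_⟩
          · exact (ih hφ {s'} (Set.subsingleton_singleton)).mp
              (sat_mono W _ T' {s'} (by simpa using hs') hs)
          · intro s hs0
            have : s = a := hT hs0 ha
            subst this
            exact ⟨s', rfl, hR⟩
      · rintro ⟨T', hs, hcov⟩
        rcases Set.eq_empty_or_nonempty T with hTe | ⟨a, ha⟩
        · exact ⟨∅, sat_empty W _, by simp [hTe]⟩
        · obtain ⟨s', hs', hR⟩ := hcov a ha
          refine ⟨{s'}, ?_, ?_⟩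
          · exact (ih hφ {s'} (Set.subsingleton_singleton)).mpr
              (sat_mono W _ T' {s'} (by simpa using hs') hs)
          · intro s hs0
            have : s = a := hT hs0 ha
            subst this
            exact ⟨s', rfl, hR⟩
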